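/- Assume a_X > b_X > 0, b_Y > a_Y, and 0 < T_y < T_I, where T_I = (b_Y − a_Y)/(2·ln(a_X/b_X)). Then y(1/2) < b_X/(a_X + b_X); moreover T_X(x) tends to −∞ as x tends to 1/2 from the right, and T_X(x) tends to +∞ as x tends to 1/2 from the left. -/

import Mathlib

open Real Filter Set Topology

/-- QRE response of the second player. -/
noncomputable def qreY (aY bY Ty : ℝ) (x : ℝ) : ℝ :=
  (1 + Real.exp ((bY - (aY + bY) * x) / Ty))⁻¹

/-- QRE temperature curve for the first player. -/
noncomputable def qreTX (aX bX aY bY Ty : ℝ) (x : ℝ) : ℝ :=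
  (bX - (aX + bX) * qreY aY bY Ty x) / Real.log (1 / x - 1)

/-- The auxiliary function L(x) = y(x) + x(1-x) ln(1/x-1) y'(x). -/
noncomputable def qreL (aY bY Ty : ℝ) (x : ℝ) : ℝ :=
  qreY aY bY Ty x + x * (1 - x) * Real.log (1 / x - 1) * deriv (qreY aY bY Ty) x

theorem stmt_3 (aX bX aY bY Ty : ℝ) (hTy : 0 < Ty)
    (hab : aX > bX) (hbX : bX > 0) (hba : bY > aY)
    (hTI : Ty < (bY - aY) / (2 * Real.log (aX / bX))) :
    qreY aY bY Ty (1/2) < bX / (aX + bX) ∧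
    Filter.Tendsto (qreTX aX bX aY bY Ty) (𝓝[>] (1/2 : ℝ)) Filter.atBot ∧
    Filter.Tendsto (qreTX aX bX aY bY Ty) (𝓝[<] (1/2 : ℝ)) Filter.atTop := by
  have haX : 0 < aX := hbX.trans hab
  have hsum : 0 < aX + bX := by linarith
  have hlogpos : 0 < Real.log (aX / bX) :=
    Real.log_pos (by rw [lt_div_iff₀ hbX]; linarith)
  -- key exponent inequality
  have hE : Real.log (aX / bX) < (bY - aY) / (2 * Ty) := by
    rw [lt_div_iff₀ (by positivity)] at hTI ⊢
    nlinarith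
  have hexp : aX / bX < Real.exp ((bY - aY) / (2 * Ty)) := by
    calc aX / bX = Real.exp (Real.log (aX / bX)) := (Real.exp_log (by positivity)).symm
    _ < _ := Real.exp_lt_exp.mpr hE
  -- Part 1
  have harg : (bY - (aY + bY) * (1/2)) / Ty = (bY - aY) / (2 * Ty) := by ring
  have hpart1 : qreY aY bY Ty (1/2) < bX / (aX + bX) := by
    unfold qreY
    rw [harg]
    have h1 : (aX + bX) / bX < 1 + Real.exp ((bY - aY) / (2 * Ty)) := by
      have : (aX + bX) / bX = 1 + aX / bX := by field_simp; ring
      rw [this]; linarith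
    have h2 : (0:ℝ) < (aX + bX) / bX := by positivity
    have := inv_strictAnti₀ h2 h1
    rwa [inv_div] at this
  have hcont : Continuous (qreY aY bY Ty) := by
    unfold qreY
    apply Continuous.inv₀
    · continuity
    · intro x; positivity
  have hc : 0 < bX - (aX + bX) * qreY aY bY Ty (1/2) := by
    have := (mul_lt_mul_iff_right₀ hsum).mpr hpart1
    rw [mul_div_cancel₀ _ hsum.ne'] at this
    linarith
  have hNcont : Continuous (fun x => bX - (aX + bX) * qreY aY bY Ty x) := by
    continuity
  have hlogcont : ContinuousAt (fun x : ℝ => Real.log (1 / x - 1)) (1/2) := by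
    apply Real.continuousAt_log (by norm_num)  |>.comp
    exact (ContinuousAt.div continuousAt_const continuousAt_id (by norm_num)).sub
      continuousAt_const
  have h0 : Real.log (1 / (1/2:ℝ) - 1) = 0 := by norm_num
  refine ⟨hpart1, ?_, ?_⟩
  · -- right limit : atBot
    have hN : Tendsto (fun x => bX - (aX + bX) * qreY aY bY Ty x) (𝓝[>] (1/2:ℝ))
        (𝓝 (bX - (aX + bX) * qreY aY bY Ty (1/2))) :=
      (hNcont.tendsto _).mono_left nhdsWithin_le_nhds
    have hneg : Tendsto (fun x : ℝ => -Real.log (1 / x - 1)) (𝓝[>] (1/2:ℝ)) (𝓝[>] (0:ℝ)) := by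
      rw [tendsto_nhdsWithin_iff]
      constructor
      · have := (hlogcont.neg.tendsto).mono_left
          (nhdsWithin_le_nhds : 𝓝[>] (1/2:ℝ) ≤ 𝓝 (1/2))
        simp only [Pi.neg_def, h0, neg_zero] at this
        exact this
      · filter_upwards [Ioo_mem_nhdsGT_of_mem (by norm_num : (1/2:ℝ) ∈ Ico (1/2:ℝ) 1)]
          with x hx
        have hx1 : (1:ℝ)/2 < x := hx.1
        have hx2 : x < 1 := hx.2
        have hx0 : (0:ℝ) < x := by linarith
        have h01 : 1 / x - 1 < 1 := by
          rw [sub_lt_iff_lt_add, div_lt_iff₀ hx0]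
          nlinarith
        have h00 : 0 < 1 / x - 1 := by
          rw [sub_pos, lt_div_iff₀ hx0]; linarith
        have : Real.log (1 / x - 1) < 0 := Real.log_neg h00 h01
        simpa [mem_Ioi] using this
    have hinv : Tendsto (fun x : ℝ => (Real.log (1 / x - 1))⁻¹) (𝓝[>] (1/2:ℝ)) atBot := by
      have h1 : Tendsto (fun x : ℝ => (-Real.log (1 / x - 1))⁻¹) (𝓝[>] (1/2:ℝ)) atTop :=
        tendsto_inv_nhdsGT_zero.comp hneg
      have h2 : Tendsto (fun x : ℝ => -(-Real.log (1 / x - 1))⁻¹) (𝓝[>] (1/2:ℝ)) atBot :=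
        tendsto_neg_atTop_atBot.comp h1
      refine h2.congr fun x => ?_
      rw [inv_neg, neg_neg]
    have := Filter.Tendsto.pos_mul_atBot hc hN hinv
    refine this.congr (fun x => ?_)
    simp only [qreTX, div_eq_mul_inv]
  · -- left limit : atTop
    have hN : Tendsto (fun x => bX - (aX + bX) * qreY aY bY Ty x) (𝓝[<] (1/2:ℝ))
        (𝓝 (bX - (aX + bX) * qreY aY bY Ty (1/2))) :=
      (hNcont.tendsto _).mono_left nhdsWithin_le_nhds
    have hpos : Tendsto (fun x : ℝ => Real.log (1 / x - 1)) (𝓝[<] (1/2:ℝ)) (𝓝[>] (0:ℝ)) := by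
      rw [tendsto_nhdsWithin_iff]
      constructor
      · have := (hlogcont.tendsto).mono_left
          (nhdsWithin_le_nhds : 𝓝[<] (1/2:ℝ) ≤ 𝓝 (1/2))
        rwa [h0] at this
      · filter_upwards [Ioo_mem_nhdsLT_of_mem (by norm_num : (1/2:ℝ) ∈ Ioc 0 (1/2:ℝ))]
          with x hx
        have hx1 : (0:ℝ) < x := hx.1
        have hx2 : x < 1/2 := hx.2
        have h01 : 1 < 1 / x - 1 := by
          rw [lt_sub_iff_add_lt, lt_div_iff₀ hx1]; linarith
        have : 0 < Real.log (1 / x - 1) := Real.log_pos h01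
        simpa [mem_Ioi] using this
    have hinv : Tendsto (fun x : ℝ => (Real.log (1 / x - 1))⁻¹) (𝓝[<] (1/2:ℝ)) atTop :=
      tendsto_inv_nhdsGT_zero.comp hpos
    have := Filter.Tendsto.pos_mul_atTop hc hN hinv
    refine this.congr (fun x => ?_)
    simp only [qreTX, div_eq_mul_inv]
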